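/- Gelfand–Naimark embedding for finite group algebras: Let G be a finite group, ι a finite index set, and for each i ∈ ι let ρ_i be a finite-dimensional complex representation of G on a space V_i. Assume the family is complete: every irreducible (simple) finite-dimensional complex representation of G is isomorphic to ρ_i for some i ∈ ι. Then the ℂ-algebra homomorphism Φ from the group algebra ℂ[G] to the product ∏_{i ∈ ι} End_ℂ(V_i) (with pointwise composition), given on f ∈ ℂ[G] by Φ(f)_i = ∑_{g ∈ G} f(g) • ρ_i(g), is injective; hence ℂ[G] is isomorphic as a ℂ-algebra to a subalgebra of ∏_{i} End_ℂ(V_i). -/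

import Mathlib

open CategoryTheory

section Aux

variable {G : Type} [Group G]

theorem fdrep_hom_comm_apply' {A B : FDRep ℂ G} (f : A ⟶ B) (g : G) (x : A) :
    f.hom (A.ρ g x) = B.ρ g (f.hom x) :=
  ConcreteCategory.congr_hom (f.comm g) x

theorem asAlgebraHom_eq_sum [Fintype G] {X : Type} [AddCommGroup X] [Module ℂ X]
    (σ : Representation ℂ G X) (f : MonoidAlgebra ℂ G) :
    σ.asAlgebraHom f = ∑ g : G, f.coeff g • σ g := by
  rw [Representation.asAlgebraHom_def, MonoidAlgebra.lift_apply]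
  exact Finsupp.sum_fintype _ _ (by simp)

/-- Restriction of a representation to an invariant submodule. -/
def subRep {X : Type} [AddCommGroup X] [Module ℂ X] (σ : Representation ℂ G X)
    (p : Submodule ℂ X) (hp : ∀ g, ∀ x ∈ p, σ g x ∈ p) : Representation ℂ G p where
  toFun g := (σ g).restrict (hp g)
  map_one' := by ext x; simp
  map_mul' g h := by ext x; simp [LinearMap.restrict_apply]

/-- A finite-dimensional representation with no nontrivial proper invariant subspace is a
simple object of `FDRep ℂ G`. -/
theorem simple_of_irreducible {X : Type} [AddCommGroup X] [Module ℂ X] [FiniteDimensional ℂ X]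
    (σ : Representation ℂ G X) (hnt : Nontrivial X)
    (hirr : ∀ p : Submodule ℂ X, (∀ g, ∀ x ∈ p, σ g x ∈ p) → p = ⊥ ∨ p = ⊤) :
    Simple (FDRep.of σ) := by
  constructor
  intro Y f hmono
  constructor
  · intro hiso h0
    obtain ⟨x, y, hxy⟩ := hnt
    apply hxy
    have h1 : ∀ z : X, z = f.hom ((inv f).hom z) := by
      intro z
      have : (inv f ≫ f) = 𝟙 (FDRep.of σ) := IsIso.inv_hom_id f
      have := ConcreteCategory.congr_hom (congrArg Action.Hom.hom this) z
      exact this.symm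
    have hh : f.hom = 0 := by rw [h0]; rfl
    have hz : ∀ z : X, z = 0 := by
      intro z
      rw [h1 z, hh]
      rfl
    rw [hz x, hz y]
  · intro hne
    -- injectivity
    have hKinv : ∀ g, ∀ x ∈ LinearMap.ker (ConcreteCategory.hom (C := FGModuleCat ℂ) f.hom), Y.ρ g x ∈ LinearMap.ker (ConcreteCategory.hom (C := FGModuleCat ℂ) f.hom) := by
      intro g x hx
      simp only [LinearMap.mem_ker] at hx ⊢
      exact (fdrep_hom_comm_apply' f g x).trans (by rw [hx, map_zero])
    let ι : FDRep.of (subRep Y.ρ _ hKinv) ⟶ Y := ⟨FGModuleCat.ofHom (LinearMap.ker (ConcreteCategory.hom (C := FGModuleCat ℂ) f.hom)).subtype, fun g => rfl⟩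
    have hι : ι ≫ f = 0 := by
      ext x
      exact x.2
    have hι0 : ι = 0 := hmono.right_cancellation _ _ (by rw [hι, Limits.zero_comp])
    have hinj : Function.Injective f.hom := by
      rw [← LinearMap.ker_eq_bot]
      ext x
      simp only [Submodule.mem_bot]
      constructor
      · intro hx
        have := congrArg Action.Hom.hom hι0
        have h2 := ConcreteCategory.congr_hom this ⟨x, hx⟩
        exact h2
      · intro h; simp [h]
    -- surjectivity
    have hRinv : ∀ g, ∀ x ∈ LinearMap.range (ConcreteCategory.hom (C := FGModuleCat ℂ) f.hom), σ g x ∈ LinearMap.range (ConcreteCategory.hom (C := FGModuleCat ℂ) f.hom) := by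
      rintro g x ⟨y, rfl⟩
      exact ⟨Y.ρ g y, fdrep_hom_comm_apply' f g y⟩
    have hsurj : Function.Surjective f.hom := by
      rcases hirr _ hRinv with h | h
      · exfalso
        apply hne
        ext y
        have : f.hom y ∈ LinearMap.range (ConcreteCategory.hom (C := FGModuleCat ℂ) f.hom) := ⟨y, rfl⟩
        rw [h] at this
        exact this
      · rw [← LinearMap.range_eq_top]; exact h
    let e := LinearEquiv.ofBijective (ConcreteCategory.hom (C := FGModuleCat ℂ) f.hom) ⟨hinj, hsurj⟩
    refine ⟨⟨⟨ConcreteCategory.ofHom (C := FGModuleCat ℂ) e.symm.toLinearMap, ?_⟩, ?_, ?_⟩⟩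
    · intro g
      ext x
      apply hinj
      show f.hom (e.symm (σ g x)) = f.hom (Y.ρ g (e.symm x))
      have h1 : f.hom (e.symm (σ g x)) = σ g x := e.apply_symm_apply _
      rw [h1, fdrep_hom_comm_apply' f g (e.symm x)]
      congr 1
      exact (e.apply_symm_apply x).symm
    · ext y
      exact e.symm_apply_apply y
    · ext x
      exact e.apply_symm_apply x

variable [Fintype G]

noncomputable instance fdMA : FiniteDimensional ℂ (MonoidAlgebra ℂ G) :=
  Module.Finite.equiv ((Finsupp.linearEquivFunOnFinite ℂ ℂ G).symm.trans (MonoidAlgebra.coeffLinearEquiv ℂ).symm)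

noncomputable def jmap (S : Submodule (MonoidAlgebra ℂ G) (MonoidAlgebra ℂ G)) :
    RestrictScalars ℂ (MonoidAlgebra ℂ G) S →ₗ[ℂ] MonoidAlgebra ℂ G where
  toFun x := ((RestrictScalars.addEquiv ℂ (MonoidAlgebra ℂ G) S) x : MonoidAlgebra ℂ G)
  map_add' x y := by simp
  map_smul' c x := by
    simp only [RingHom.id_apply]
    rw [show (RestrictScalars.addEquiv ℂ (MonoidAlgebra ℂ G) S) (c • x)
        = algebraMap ℂ (MonoidAlgebra ℂ G) c • (RestrictScalars.addEquiv ℂ (MonoidAlgebra ℂ G) S) x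
      from RestrictScalars.addEquiv_map_smul ..]
    rw [Submodule.coe_smul, algebraMap_smul]

theorem jmap_injective (S : Submodule (MonoidAlgebra ℂ G) (MonoidAlgebra ℂ G)) :
    Function.Injective (jmap S) := by
  intro x y h
  apply (RestrictScalars.addEquiv ℂ (MonoidAlgebra ℂ G) S).injective
  exact Subtype.ext h

noncomputable instance rsModule (S : Submodule (MonoidAlgebra ℂ G) (MonoidAlgebra ℂ G)) :
    @Module ℂ (RestrictScalars ℂ (MonoidAlgebra ℂ G) S) _ AddCommGroup.toAddCommMonoid :=
  inferInstanceAs (Module ℂ (RestrictScalars ℂ (MonoidAlgebra ℂ G) S))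

noncomputable instance fdRS (S : Submodule (MonoidAlgebra ℂ G) (MonoidAlgebra ℂ G)) :
    FiniteDimensional ℂ (RestrictScalars ℂ (MonoidAlgebra ℂ G) S) :=
  FiniteDimensional.of_injective (jmap S) (jmap_injective S)

noncomputable instance fdRS' (S : Submodule (MonoidAlgebra ℂ G) (MonoidAlgebra ℂ G)) :
    @Module.Finite ℂ (RestrictScalars ℂ (MonoidAlgebra ℂ G) S) _ AddCommGroup.toAddCommMonoid
      (RestrictScalars.module ℂ (MonoidAlgebra ℂ G) S) :=
  fdRS S

theorem ofModule_irr (S : Submodule (MonoidAlgebra ℂ G) (MonoidAlgebra ℂ G))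
    (hS : IsSimpleModule (MonoidAlgebra ℂ G) S)
    (p : Submodule ℂ (RestrictScalars ℂ (MonoidAlgebra ℂ G) S))
    (hp : ∀ g, ∀ x ∈ p, Representation.ofModule (k := ℂ) (G := G) (↥S) g x ∈ p) :
    p = ⊥ ∨ p = ⊤ := by
  set A := MonoidAlgebra ℂ G
  set E := RestrictScalars.addEquiv ℂ A ↥S with hE
  have key : ∀ a : A, ∀ x ∈ p, ∃ y ∈ p, a • E x = E y := by
    intro a
    induction a using MonoidAlgebra.induction_on with
    | of g =>
      intro x hx
      refine ⟨Representation.ofModule (k := ℂ) (G := G) (↥S) g x, hp g x hx, ?_⟩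
      have h1 := Representation.ofModule_asAlgebraHom_apply_apply (k := ℂ) (G := G)
        (M := ↥S) (MonoidAlgebra.of ℂ G g) x
      rw [Representation.asAlgebraHom_of] at h1
      rw [h1]
      exact (AddEquiv.apply_symm_apply _ _).symm
    | add a b ha hb =>
      intro x hx
      obtain ⟨y, hy, hy'⟩ := ha x hx
      obtain ⟨z, hz, hz'⟩ := hb x hx
      exact ⟨y + z, p.add_mem hy hz, by rw [add_smul, hy', hz', map_add]⟩
    | smul c a ha =>
      intro x hx
      obtain ⟨y, hy, hy'⟩ := ha x hx
      refine ⟨c • y, p.smul_mem c hy, ?_⟩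
      rw [Algebra.smul_def, mul_smul, hy',
        ← RestrictScalars.addEquiv_map_smul]
  -- build the corresponding submodule over the monoid algebra
  let q : Submodule A ↥S :=
    { carrier := E '' p
      zero_mem' := ⟨0, p.zero_mem, map_zero E⟩
      add_mem' := by
        rintro _ _ ⟨x, hx, rfl⟩ ⟨y, hy, rfl⟩
        exact ⟨x + y, p.add_mem hx hy, (map_add E x y).symm⟩
      smul_mem' := by
        rintro a _ ⟨x, hx, rfl⟩
        obtain ⟨y, hy, hy'⟩ := key a x hx
        exact ⟨y, hy, hy'.symm⟩ }
  rcases eq_bot_or_eq_top q with h | h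
  · left
    rw [eq_bot_iff]
    intro x hx
    have : E x ∈ q := ⟨x, hx, rfl⟩
    rw [h] at this
    simp only [Submodule.mem_bot] at this ⊢
    apply E.injective
    rw [this, map_zero]
  · right
    rw [eq_top_iff]
    intro x _
    have : E x ∈ q := by rw [h]; trivial
    obtain ⟨y, hy, hy'⟩ := this
    rwa [← E.injective hy']

theorem annihilates (S : Submodule (MonoidAlgebra ℂ G) (MonoidAlgebra ℂ G))
    (f : MonoidAlgebra ℂ G)
    (hf : (Representation.ofModule (k := ℂ) (G := G) (↥S)).asAlgebraHom f = 0)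
    {s : MonoidAlgebra ℂ G} (hs : s ∈ S) : f * s = 0 := by
  have h1 := Representation.ofModule_asAlgebraHom_apply_apply (k := ℂ) (G := G)
    (M := ↥S) f ((RestrictScalars.addEquiv ℂ (MonoidAlgebra ℂ G) ↥S).symm ⟨s, hs⟩)
  rw [hf] at h1
  simp only [LinearMap.zero_apply] at h1
  have h2 : f • (⟨s, hs⟩ : ↥S) = 0 := by
    apply (RestrictScalars.addEquiv ℂ (MonoidAlgebra ℂ G) ↥S).symm.injective
    rw [map_zero, h1, AddEquiv.apply_symm_apply]
  have := congrArg (Subtype.val) h2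
  simpa [smul_eq_mul] using this

end Aux

/-- **Gelfand–Naimark embedding for finite group algebras.** Let `G` be a finite
group and `(ρ i)_{i ∈ ι}` a finite family of finite-dimensional complex
representations of `G` containing (up to isomorphism) every irreducible
representation. Then the ℂ-algebra homomorphism `Φ : ℂ[G] → ∏ i, End ℂ (V i)`,
`Φ(f)_i = ∑_g f(g) • ρ_i(g)`, is injective; hence `ℂ[G]` is isomorphic to a
subalgebra of `∏ i, End ℂ (V i)`. -/
theorem gelfand_naimark_embedding (G : Type) [Group G] [Fintype G]
    (ι : Type) [Fintype ι] (V : ι → Type) [∀ i, AddCommGroup (V i)]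
    [∀ i, Module ℂ (V i)] [∀ i, FiniteDimensional ℂ (V i)]
    (ρ : ∀ i, Representation ℂ G (V i))
    (hcomplete : ∀ W : FDRep ℂ G, Simple W → ∃ i, Nonempty (W ≅ FDRep.of (ρ i))) :
    Function.Injective
      (fun f : MonoidAlgebra ℂ G => fun i => ∑ g : G, f.coeff g • (ρ i g)) := by
  intro f₁ f₂ h
  rw [← sub_eq_zero]
  set f := f₁ - f₂ with hf
  -- the difference is killed by every `ρ i`
  have hAlg : ∀ i, (ρ i).asAlgebraHom f = 0 := by
    intro i
    rw [asAlgebraHom_eq_sum]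
    have hi := congrFun h i
    simp only at hi
    have : ∀ g : G, f.coeff g • (ρ i) g = f₁.coeff g • (ρ i) g - f₂.coeff g • (ρ i) g := by
      intro g
      rw [hf, MonoidAlgebra.coeff_sub, Finsupp.sub_apply, sub_smul]
    rw [Finset.sum_congr rfl fun g _ => this g, Finset.sum_sub_distrib, hi, sub_self]
  -- the difference is killed by every simple representation
  have hSimple : ∀ W : FDRep ℂ G, Simple W → Representation.asAlgebraHom W.ρ f = 0 := by
    intro W hW
    obtain ⟨i, ⟨e⟩⟩ := hcomplete W hW
    set φ := FDRep.isoToLinearEquiv e with hφ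
    have hconj : ∀ (g : G) (w : W), φ (W.ρ g w) = ρ i g (φ w) := by
      intro g w
      show φ (W.ρ g w) = (FDRep.of (ρ i)).ρ g (φ w)
      rw [FDRep.Iso.conj_ρ e]
      simp [LinearEquiv.conj_apply, hφ]
    apply LinearMap.ext
    intro w
    apply φ.injective
    rw [LinearMap.zero_apply, map_zero]
    have h1 : φ (Representation.asAlgebraHom W.ρ f w) = (ρ i).asAlgebraHom f (φ w) := by
      rw [asAlgebraHom_eq_sum (W.ρ : Representation ℂ G W), asAlgebraHom_eq_sum]
      simp only [LinearMap.sum_apply, LinearMap.smul_apply, map_sum, map_smul]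
      exact Finset.sum_congr rfl fun g _ => by rw [hconj]
    rw [h1, hAlg i, LinearMap.zero_apply]
  -- the difference annihilates every simple submodule of the group algebra
  have hann : ∀ S : Submodule (MonoidAlgebra ℂ G) (MonoidAlgebra ℂ G),
      IsSimpleModule (MonoidAlgebra ℂ G) S → ∀ s ∈ S, f * s = 0 := by
    intro S hS s hs
    haveI := hS
    haveI : Nontrivial ↥S := IsSimpleModule.nontrivial (MonoidAlgebra ℂ G) ↥S
    haveI : Nontrivial (RestrictScalars ℂ (MonoidAlgebra ℂ G) ↥S) :=
      (RestrictScalars.addEquiv ℂ (MonoidAlgebra ℂ G) ↥S).toEquiv.nontrivial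
    have hsim : Simple (FDRep.of (Representation.ofModule (k := ℂ) (G := G) (↥S))) :=
      simple_of_irreducible _ inferInstance (ofModule_irr S hS)
    have h0 := hSimple _ hsim
    exact annihilates S f h0 hs
  -- conclude using semisimplicity of the group algebra
  haveI : NeZero ((Fintype.card G : ℂ)) := ⟨Nat.cast_ne_zero.2 Fintype.card_ne_zero⟩
  have htop : sSup { m : Submodule (MonoidAlgebra ℂ G) (MonoidAlgebra ℂ G) |
      IsSimpleModule (MonoidAlgebra ℂ G) m } = ⊤ :=
    IsSemisimpleModule.sSup_simples_eq_top _ _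
  have h1 : (1 : MonoidAlgebra ℂ G) ∈ sSup { m : Submodule (MonoidAlgebra ℂ G)
      (MonoidAlgebra ℂ G) | IsSimpleModule (MonoidAlgebra ℂ G) m } := by
    rw [htop]; trivial
  rw [sSup_eq_iSup'] at h1
  have : f * 1 = 0 := by
    refine Submodule.iSup_induction _ (motive := fun x => f * x = 0) h1 ?_ (by show f * 0 = 0; rw [mul_zero]) ?_
    · rintro ⟨S, hS⟩ x hx
      exact hann S hS x hx
    · intro x y hx hy
      rw [mul_add, hx, hy, add_zero]
  rwa [mul_one] at this
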